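/- Let G1 and G2 be graphs with V(G1) ∩ V(G2) = {u,v} and let G be their 2-sum along f = uv (glue and delete f from both). If x1 = Σ_{i=1}^{j} δ_{G1}(A_i) and x2 = Σ_{i=1}^{k} δ_{G2}(B_i) with each A_i, B_i containing u but not v for i ≤ γ and containing neither u nor v for i > γ (same γ for both), then the concatenation of x1 and x2 restricted to E(G) equals Σ_{i=1}^{γ} δ_G(A_i ∪ B_i) + Σ_{i=γ+1}^{j} δ_G(A_i) + Σ_{i=γ+1}^{k} δ_G(B_i); in particular it lies in the nonnegative integer cone of cuts of G. -/

import Mathlib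

open scoped Classical

def InCut {V : Type*} (S : Set V) (e : Sym2 V) : Prop :=
  ∃ i j, e = s(i, j) ∧ i ∈ S ∧ j ∉ S

noncomputable def cutVec {V : Type*} (G : SimpleGraph V) (S : Set V) : Sym2 V → ℝ :=
  fun e => if e ∈ G.edgeSet ∧ InCut S e then 1 else 0

def intconeOf {d : Type*} (X : Set (d → ℝ)) : Set (d → ℝ) :=
  {y | ∃ (s : Finset (d → ℝ)) (c : (d → ℝ) → ℕ),
    ↑s ⊆ X ∧ y = ∑ v ∈ s, (c v : ℝ) • v}

lemma incut_sab {V : Type*} {S : Set V} {a b : V} :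
    InCut S s(a, b) ↔ (a ∈ S ∧ b ∉ S) ∨ (b ∈ S ∧ a ∉ S) := by
  constructor
  · rintro ⟨i, j, he, hi, hj⟩
    rw [Sym2.eq_iff] at he
    rcases he with ⟨rfl, rfl⟩ | ⟨rfl, rfl⟩
    · exact Or.inl ⟨hi, hj⟩
    · exact Or.inr ⟨hi, hj⟩
  · rintro (⟨h1, h2⟩ | ⟨h1, h2⟩)
    · exact ⟨a, b, rfl, h1, h2⟩
    · exact ⟨b, a, Sym2.eq_swap, h1, h2⟩

lemma intconeOf_zero {d : Type*} (X : Set (d → ℝ)) : 0 ∈ intconeOf X :=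
  ⟨∅, fun _ => 0, by simp, by simp⟩

lemma mem_intconeOf {d : Type*} {X : Set (d → ℝ)} {x : d → ℝ} (hx : x ∈ X) :
    x ∈ intconeOf X :=
  ⟨{x}, fun _ => 1, by simpa, by simp⟩

lemma aux_sum_ite {d : Type*} (s w : Finset (d → ℝ)) (hsw : s ⊆ w) (c : (d → ℝ) → ℕ) :
    ∑ v ∈ w, (((if v ∈ s then c v else 0) : ℕ) : ℝ) • v = ∑ v ∈ s, (c v : ℝ) • v := by
  rw [← Finset.sum_subset hsw]
  · exact Finset.sum_congr rfl fun v hv => by simp [hv]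
  · intro v _ hv; simp [hv]

lemma add_mem_intconeOf {d : Type*} {X : Set (d → ℝ)} {x y : d → ℝ}
    (hx : x ∈ intconeOf X) (hy : y ∈ intconeOf X) : x + y ∈ intconeOf X := by
  obtain ⟨s, c, hs, rfl⟩ := hx
  obtain ⟨t, e, ht, rfl⟩ := hy
  refine ⟨s ∪ t, fun v => (if v ∈ s then c v else 0) + (if v ∈ t then e v else 0),
    ?_, ?_⟩
  · rw [Finset.coe_union]; exact Set.union_subset hs ht
  · simp only [Nat.cast_add, add_smul, Finset.sum_add_distrib]
    rw [aux_sum_ite s (s ∪ t) Finset.subset_union_left c,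
      aux_sum_ite t (s ∪ t) Finset.subset_union_right e]

lemma sum_mem_intconeOf {d ι : Type*} {X : Set (d → ℝ)} (s : Finset ι) (f : ι → d → ℝ)
    (hf : ∀ i ∈ s, f i ∈ X) : ∑ i ∈ s, f i ∈ intconeOf X := by
  classical
  induction s using Finset.induction with
  | empty => simpa using intconeOf_zero X
  | insert _ _ h ih =>
    rw [Finset.sum_insert h]
    exact add_mem_intconeOf (mem_intconeOf (hf _ (by simp)))
      (ih fun i hi => hf i (by simp [hi]))

theorem twoSum_concat_decomposition {V : Type*} [Fintype V]
    (G₁ G₂ : SimpleGraph V) (u v : V) (hadj₁ : G₁.Adj u v) (hadj₂ : G₂.Adj u v)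
    (hsupp : G₁.support ∩ G₂.support ⊆ {u, v})
    (A B : ℕ → Set V) (γ j k : ℕ) (hγj : γ ≤ j) (hγk : γ ≤ k)
    (hA : ∀ i, A i ⊆ G₁.support ∪ {u, v}) (hB : ∀ i, B i ⊆ G₂.support ∪ {u, v})
    (hAuv : ∀ i < γ, u ∈ A i ∧ v ∉ A i) (hBuv : ∀ i < γ, u ∈ B i ∧ v ∉ B i)
    (hA0 : ∀ i, γ ≤ i → A i ∩ {u, v} = ∅) (hB0 : ∀ i, γ ≤ i → B i ∩ {u, v} = ∅) :
    Function.update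
        ((∑ i ∈ Finset.range j, cutVec G₁ (A i)) + ∑ i ∈ Finset.range k, cutVec G₂ (B i))
        s(u, v) 0
      = (∑ i ∈ Finset.range γ, cutVec ((G₁ ⊔ G₂).deleteEdges {s(u, v)}) (A i ∪ B i))
        + (∑ i ∈ Finset.Ico γ j, cutVec ((G₁ ⊔ G₂).deleteEdges {s(u, v)}) (A i))
        + (∑ i ∈ Finset.Ico γ k, cutVec ((G₁ ⊔ G₂).deleteEdges {s(u, v)}) (B i))
      ∧ Function.update
          ((∑ i ∈ Finset.range j, cutVec G₁ (A i)) + ∑ i ∈ Finset.range k, cutVec G₂ (B i))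
          s(u, v) 0
        ∈ intconeOf (Set.range (cutVec ((G₁ ⊔ G₂).deleteEdges {s(u, v)}))) := by
  set G := (G₁ ⊔ G₂).deleteEdges {s(u, v)} with hG
  -- small helpers
  have hBsmall : ∀ i x, x ∈ G₁.support → x ∈ B i → x = u ∨ x = v := by
    intro i x hx hxB
    rcases hB i hxB with h | h
    · have := hsupp ⟨hx, h⟩; simpa using this
    · simpa using h
  have hAsmall : ∀ i x, x ∈ G₂.support → x ∈ A i → x = u ∨ x = v := by
    intro i x hx hxA
    rcases hA i hxA with h | h
    · have := hsupp ⟨h, hx⟩; simpa using this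
    · simpa using h
  have key : Function.update
        ((∑ i ∈ Finset.range j, cutVec G₁ (A i)) + ∑ i ∈ Finset.range k, cutVec G₂ (B i))
        s(u, v) 0
      = (∑ i ∈ Finset.range γ, cutVec G (A i ∪ B i))
        + (∑ i ∈ Finset.Ico γ j, cutVec G (A i))
        + (∑ i ∈ Finset.Ico γ k, cutVec G (B i)) := by
    funext e
    induction e using Sym2.ind with
    | _ a b =>
    by_cases hf : s(a, b) = s(u, v)
    · rw [hf, Function.update_self]
      have hnot : ∀ S : Set V, cutVec G S s(u, v) = 0 := by
        intro S
        simp [cutVec, hG, SimpleGraph.edgeSet_deleteEdges]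
      simp [hf, hnot]
    · rw [Function.update_of_ne hf]
      simp only [Pi.add_apply, Finset.sum_apply]
      by_cases h1 : G₁.Adj a b
      · -- e is an edge of G₁ only
        have ha1 : a ∈ G₁.support := ⟨b, h1⟩
        have hb1 : b ∈ G₁.support := ⟨a, h1.symm⟩
        have hnot2 : ¬ G₂.Adj a b := by
          intro h2
          have ha : a = u ∨ a = v := by simpa using hsupp ⟨ha1, ⟨b, h2⟩⟩
          have hb : b = u ∨ b = v := by simpa using hsupp ⟨hb1, ⟨a, h2.symm⟩⟩
          have hne := h1.ne
          apply hf
          rcases ha with rfl | rfl <;> rcases hb with rfl | rfl <;>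
            simp_all [Sym2.eq_swap]
        have heG : s(a, b) ∈ G.edgeSet := by
          rw [hG, SimpleGraph.edgeSet_deleteEdges]
          exact ⟨by simp [h1], by simpa using hf⟩
        have e1 : ∑ i ∈ Finset.range k, cutVec G₂ (B i) s(a, b) = 0 :=
          Finset.sum_eq_zero fun i _ => by simp [cutVec, hnot2]
        have e2 : ∑ i ∈ Finset.Ico γ k, cutVec G (B i) s(a, b) = 0 := by
          refine Finset.sum_eq_zero fun i hi => ?_
          have hiγ := (Finset.mem_Ico.mp hi).1
          have hmem : ∀ x, x ∈ G₁.support → x ∉ B i := by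
            intro x hxs hx
            have hx2 : x ∈ B i ∩ {u, v} :=
              ⟨hx, by rcases hBsmall i x hxs hx with h | h <;> simp [h]⟩
            rw [hB0 i hiγ] at hx2
            exact hx2
          have hnc : ¬ InCut (B i) s(a, b) := by
            rw [incut_sab]
            rintro (⟨hx, -⟩ | ⟨hx, -⟩)
            · exact hmem a ha1 hx
            · exact hmem b hb1 hx
          simp [cutVec, hnc]
        have e3 : ∑ i ∈ Finset.range γ, cutVec G (A i ∪ B i) s(a, b)
            = ∑ i ∈ Finset.range γ, cutVec G₁ (A i) s(a, b) := by
          refine Finset.sum_congr rfl fun i hi => ?_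
          have hiγ := Finset.mem_range.mp hi
          have hx : ∀ x, x ∈ G₁.support → (x ∈ A i ∪ B i ↔ x ∈ A i) := by
            intro x hxs
            constructor
            · rintro (h | h)
              · exact h
              · rcases hBsmall i x hxs h with rfl | rfl
                · exact (hAuv i hiγ).1
                · exact absurd h (hBuv i hiγ).2
            · exact Or.inl
          have hiff : InCut (A i ∪ B i) s(a, b) ↔ InCut (A i) s(a, b) := by
            rw [incut_sab, incut_sab, hx a ha1, hx b hb1]
          simp [cutVec, heG, h1, hiff]
        have e4 : ∑ i ∈ Finset.Ico γ j, cutVec G (A i) s(a, b)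
            = ∑ i ∈ Finset.Ico γ j, cutVec G₁ (A i) s(a, b) :=
          Finset.sum_congr rfl fun i _ => by simp [cutVec, heG, h1]
        rw [e1, e2, e3, e4, add_zero, add_zero]
        exact (Finset.sum_range_add_sum_Ico _ hγj).symm
      · by_cases h2 : G₂.Adj a b
        · -- symmetric case
          have ha2 : a ∈ G₂.support := ⟨b, h2⟩
          have hb2 : b ∈ G₂.support := ⟨a, h2.symm⟩
          have heG : s(a, b) ∈ G.edgeSet := by
            rw [hG, SimpleGraph.edgeSet_deleteEdges]
            exact ⟨by simp [h2], by simpa using hf⟩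
          have e1 : ∑ i ∈ Finset.range j, cutVec G₁ (A i) s(a, b) = 0 :=
            Finset.sum_eq_zero fun i _ => by simp [cutVec, h1]
          have e2 : ∑ i ∈ Finset.Ico γ j, cutVec G (A i) s(a, b) = 0 := by
          -- A i misses both endpoints
            refine Finset.sum_eq_zero fun i hi => ?_
            have hiγ := (Finset.mem_Ico.mp hi).1
            have hmem : ∀ x, x ∈ G₂.support → x ∉ A i := by
              intro x hxs hx
              have hx2 : x ∈ A i ∩ {u, v} :=
                ⟨hx, by rcases hAsmall i x hxs hx with h | h <;> simp [h]⟩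
              rw [hA0 i hiγ] at hx2
              exact hx2
            have hnc : ¬ InCut (A i) s(a, b) := by
              rw [incut_sab]
              rintro (⟨hx, -⟩ | ⟨hx, -⟩)
              · exact hmem a ha2 hx
              · exact hmem b hb2 hx
            simp [cutVec, hnc]
          have e3 : ∑ i ∈ Finset.range γ, cutVec G (A i ∪ B i) s(a, b)
              = ∑ i ∈ Finset.range γ, cutVec G₂ (B i) s(a, b) := by
            refine Finset.sum_congr rfl fun i hi => ?_
            have hiγ := Finset.mem_range.mp hi
            have hx : ∀ x, x ∈ G₂.support → (x ∈ A i ∪ B i ↔ x ∈ B i) := by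
              intro x hxs
              constructor
              · rintro (h | h)
                · rcases hAsmall i x hxs h with rfl | rfl
                  · exact (hBuv i hiγ).1
                  · exact absurd h (hAuv i hiγ).2
                · exact h
              · exact Or.inr
            have hiff : InCut (A i ∪ B i) s(a, b) ↔ InCut (B i) s(a, b) := by
              rw [incut_sab, incut_sab, hx a ha2, hx b hb2]
            simp [cutVec, heG, h2, hiff]
          have e4 : ∑ i ∈ Finset.Ico γ k, cutVec G (B i) s(a, b)
              = ∑ i ∈ Finset.Ico γ k, cutVec G₂ (B i) s(a, b) :=
            Finset.sum_congr rfl fun i _ => by simp [cutVec, heG, h2]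
          rw [e1, e2, e3, e4, zero_add, add_zero]
          rw [← Finset.sum_range_add_sum_Ico (fun i => cutVec G₂ (B i) s(a, b)) hγk]
        · -- not an edge of either graph
          have hnG : s(a, b) ∉ G.edgeSet := by
            rw [hG, SimpleGraph.edgeSet_deleteEdges]
            rintro ⟨hm, -⟩
            simp only [SimpleGraph.mem_edgeSet, SimpleGraph.sup_adj] at hm
            rcases hm with h | h
            · exact h1 h
            · exact h2 h
          simp [cutVec, h1, h2, hnG]
  refine ⟨key, ?_⟩
  rw [key]
  refine add_mem_intconeOf (add_mem_intconeOf ?_ ?_) ?_ <;>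
    exact sum_mem_intconeOf _ _ fun i _ => ⟨_, rfl⟩
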